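/- (Rematching, symmetric case) In the symmetric setup below, let ε̄ ≥ 0 and ε := (1+ε̄)^m − 1, and let R = (R_i)_{i∈Ā} be an ε̄-local optimum (with equal weights 1/n) of J with respect to the endowed valuations v̄_i; set R_i := ∅ for i ∈ A∖Ā. Then there exists a partial matching ρ : A → H ∪ {⊥} (i.e., ρ(i) = ρ(k) ≠ ⊥ implies i = k) such that ∏_{i∈A} v_i(R_i ∪ {ρ(i)})^{1/n} ≥ OPT / (4·(1+ε)), where R_i ∪ {⊥} is interpreted as R_i. -/

import Mathlib

open Finset

private lemma geom_aux {n m : ℕ} (x : ℝ) (hx : 1 ≤ x) (h : n ≤ m) :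
    (m : ℝ) * (x ^ n - 1) ≤ (n : ℝ) * (x ^ m - 1) := by
  have hx0 : (0:ℝ) ≤ x - 1 := by linarith
  have hsplit : (∑ i ∈ Finset.range m, x ^ i)
      = (∑ i ∈ Finset.range n, x ^ i) + ∑ i ∈ Finset.Ico n m, x ^ i := by
    rw [Finset.range_eq_Ico, Finset.range_eq_Ico]
    exact (Finset.sum_Ico_consecutive (fun i => x ^ i) (Nat.zero_le n) h).symm
  have h1 : (∑ i ∈ Finset.range n, x ^ i) ≤ (n:ℝ) * x ^ n := by
    calc (∑ i ∈ Finset.range n, x ^ i) ≤ ∑ _i ∈ Finset.range n, x ^ n :=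
          Finset.sum_le_sum fun i hi => pow_le_pow_right₀ hx (le_of_lt (Finset.mem_range.mp hi))
      _ = (n:ℝ) * x ^ n := by simp [mul_comm]
  have h2 : ((m:ℝ) - n) * x ^ n ≤ ∑ i ∈ Finset.Ico n m, x ^ i := by
    calc ((m:ℝ) - n) * x ^ n = ∑ _i ∈ Finset.Ico n m, x ^ n := by
          rw [Finset.sum_const, Nat.card_Ico, nsmul_eq_mul, Nat.cast_sub h]
      _ ≤ ∑ i ∈ Finset.Ico n m, x ^ i :=
          Finset.sum_le_sum fun i hi => pow_le_pow_right₀ hx (Finset.mem_Ico.mp hi).1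
  have hmn : (0:ℝ) ≤ (m:ℝ) - n := by
    have : (n:ℝ) ≤ m := by exact_mod_cast h
    linarith
  have hn0 : (0:ℝ) ≤ n := by positivity
  have key : (m : ℝ) * (∑ i ∈ Finset.range n, x ^ i) ≤ (n : ℝ) * ∑ i ∈ Finset.range m, x ^ i := by
    have t1 : ((m:ℝ) - n) * (∑ i ∈ Finset.range n, x ^ i) ≤ ((m:ℝ) - n) * ((n:ℝ) * x ^ n) :=
      mul_le_mul_of_nonneg_left h1 hmn
    have t2 : (n:ℝ) * (((m:ℝ) - n) * x ^ n) ≤ (n:ℝ) * ∑ i ∈ Finset.Ico n m, x ^ i :=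
      mul_le_mul_of_nonneg_left h2 hn0
    calc (m:ℝ) * (∑ i ∈ Finset.range n, x ^ i)
        = (n:ℝ) * (∑ i ∈ Finset.range n, x ^ i)
          + ((m:ℝ) - n) * (∑ i ∈ Finset.range n, x ^ i) := by ring
      _ ≤ (n:ℝ) * (∑ i ∈ Finset.range n, x ^ i) + (n:ℝ) * (((m:ℝ) - n) * x ^ n) := by linarith
      _ ≤ (n:ℝ) * (∑ i ∈ Finset.range n, x ^ i) + (n:ℝ) * ∑ i ∈ Finset.Ico n m, x ^ i := by
          linarith
      _ = (n:ℝ) * ∑ i ∈ Finset.range m, x ^ i := by rw [hsplit]; ring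
  have gmn : x ^ n - 1 = (∑ i ∈ Finset.range n, x ^ i) * (x - 1) := (geom_sum_mul x n).symm
  have gmm : x ^ m - 1 = (∑ i ∈ Finset.range m, x ^ i) * (x - 1) := (geom_sum_mul x m).symm
  rw [gmn, gmm, ← mul_assoc, ← mul_assoc]
  exact mul_le_mul_of_nonneg_right key hx0

section submod

variable {G : Type*} [DecidableEq G] (v : Finset G → ℝ)
  (hmono : ∀ S T : Finset G, S ⊆ T → v S ≤ v T)
  (hsub : ∀ S T : Finset G, v (S ∩ T) + v (S ∪ T) ≤ v S + v T)
  (h0 : v ∅ = 0)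

set_option linter.unusedSectionVars false

include hmono h0 in
private lemma v_nonneg (S : Finset G) : 0 ≤ v S := h0 ▸ hmono ∅ S (Finset.empty_subset S)

include hmono hsub h0 in
private lemma marg_single (S : Finset G) (y : G) : v (S ∪ {y}) ≤ v S + v {y} := by
  by_cases hy : y ∈ S
  · have hU : S ∪ {y} = S := by
      apply Finset.union_eq_left.mpr; simp [hy]
    rw [hU]
    linarith [v_nonneg v hmono h0 {y}]
  · have h := hsub S {y}
    have hint : S ∩ {y} = ∅ := by
      apply Finset.eq_empty_iff_forall_notMem.mpr
      intro x hx
      rcases Finset.mem_inter.mp hx with ⟨h1, h2⟩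
      rw [Finset.mem_singleton] at h2; subst h2; exact hy h1
    rw [hint, h0] at h; linarith

include hmono hsub h0 in
private lemma sub1 (R : Finset G) : ∀ (T : Finset G), Disjoint T R →
    v (R ∪ T) ≤ v R + ∑ j ∈ T, (v (R ∪ {j}) - v R) := by
  intro T
  induction T using Finset.induction_on with
  | empty => simp
  | @insert j T' hj ih =>
    intro hdisj
    have hd' : Disjoint T' R :=
      Finset.disjoint_of_subset_left (Finset.subset_insert j T') hdisj
    have hjR : j ∉ R := Finset.disjoint_left.mp hdisj (Finset.mem_insert_self j T')
    have hsb := hsub (R ∪ T') (R ∪ {j})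
    have hint : (R ∪ T') ∩ (R ∪ {j}) = R := by
      ext x
      simp only [Finset.mem_inter, Finset.mem_union, Finset.mem_singleton]
      constructor
      · rintro ⟨h1, h2⟩
        rcases h2 with h2 | h2
        · exact h2
        · subst h2
          rcases h1 with h1 | h1
          · exact h1
          · exact absurd h1 hj
      · intro hx; exact ⟨Or.inl hx, Or.inl hx⟩
    have hun : (R ∪ T') ∪ (R ∪ {j}) = R ∪ insert j T' := by
      ext x
      simp only [Finset.mem_union, Finset.mem_singleton, Finset.mem_insert]
      tauto
    rw [hint, hun] at hsb
    have ihT := ih hd'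
    rw [Finset.sum_insert hj]
    linarith

include hmono hsub h0 in
private lemma sub1' (R X : Finset G) :
    v X ≤ v R + ∑ j ∈ X \ R, (v (R ∪ {j}) - v R) := by
  have h1 : v X ≤ v (R ∪ (X \ R)) := by
    apply hmono
    intro x hx
    by_cases hxR : x ∈ R
    · exact Finset.mem_union_left _ hxR
    · exact Finset.mem_union_right _ (Finset.mem_sdiff.mpr ⟨hx, hxR⟩)
  exact h1.trans (sub1 v hmono hsub h0 R (X \ R) Finset.sdiff_disjoint)

include hmono hsub h0 in
private lemma sub2 (R : Finset G) : ∀ (T : Finset G), T ⊆ R →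
    ∑ j ∈ T, (v R - v (R.erase j)) ≤ v R - v (R \ T) := by
  intro T
  induction T using Finset.induction_on with
  | empty => simp
  | @insert j T' hj ih =>
    intro hT
    have hjR : j ∈ R := hT (Finset.mem_insert_self j T')
    have hT' : T' ⊆ R := (Finset.subset_insert j T').trans hT
    have hsb := hsub (R.erase j) (R \ T')
    have hint : (R.erase j) ∩ (R \ T') = R \ insert j T' := by
      ext x
      simp only [Finset.mem_inter, Finset.mem_erase, Finset.mem_sdiff, Finset.mem_insert]
      tauto
    have hun : (R.erase j) ∪ (R \ T') = R := by
      ext x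
      simp only [Finset.mem_union, Finset.mem_erase, Finset.mem_sdiff]
      constructor
      · rintro (⟨_, h⟩ | ⟨h, _⟩) <;> exact h
      · intro hx
        by_cases hxj : x = j
        · subst hxj; right; exact ⟨hx, hj⟩
        · left; exact ⟨hxj, hx⟩
    rw [hint, hun] at hsb
    have ihT := ih hT'
    rw [Finset.sum_insert hj]
    linarith

include hmono hsub h0 in
private lemma subadd (Y : Finset G) : v Y ≤ ∑ y ∈ Y, v {y} := by
  have h := sub1 v hmono hsub h0 ∅ Y (Finset.disjoint_empty_right Y)
  rw [Finset.empty_union] at h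
  have : ∀ y ∈ Y, v (∅ ∪ {y}) - v ∅ = v {y} := by
    intro y _; rw [Finset.empty_union, h0]; ring
  rw [Finset.sum_congr rfl this] at h
  linarith [h, h0]

end submod

private lemma prod_le_of_rpow_le {ι : Type*} (s : Finset ι) (f g : ι → ℝ) (r : ℝ) (hr : 0 < r)
    (hf : ∀ i ∈ s, 0 ≤ f i) (hg : ∀ i ∈ s, 0 ≤ g i)
    (h : (∏ i ∈ s, f i ^ r) ≤ ∏ i ∈ s, g i ^ r) : ∏ i ∈ s, f i ≤ ∏ i ∈ s, g i := by
  rw [Real.finset_prod_rpow s f hf r, Real.finset_prod_rpow s g hg r] at h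
  exact (Real.rpow_le_rpow_iff (Finset.prod_nonneg hf) (Finset.prod_nonneg hg) hr).mp h

set_option maxHeartbeats 1600000 in
/-- (Rematching, symmetric case.)
Let `ε̄ ≥ 0`, `ε := (1+ε̄)^m − 1`, and let `R` be an `ε̄`-local optimum (with equal
weights `1/n`) of `J` with respect to the endowed valuations; `R_i = ∅` for `i ∉ Ā`.
Then there exists a partial matching `ρ : A → H ∪ {⊥}` such that
`∏_{i∈A} v_i(R_i ∪ {ρ(i)})^{1/n} ≥ OPT / (4·(1+ε))`. -/
theorem rematching_symmetric {G A : Type*} [Fintype G] [DecidableEq G]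
    [Fintype A] [DecidableEq A]
    (n m : ℕ) (hn : n = Fintype.card A) (hm : m = Fintype.card G)
    (hn1 : 1 ≤ n) (hnm : n ≤ m)
    (v : A → Finset G → ℝ)
    (hmono : ∀ i, ∀ S T : Finset G, S ⊆ T → v i S ≤ v i T)
    (hsubmod : ∀ i, ∀ S T : Finset G, v i (S ∩ T) + v i (S ∪ T) ≤ v i S + v i T)
    (hv0 : ∀ i, v i ∅ = 0)
    (OPT : ℝ) (hOPTpos : 0 < OPT)
    (hOPTub : ∀ P : A → Finset G, (∀ i k, i ≠ k → Disjoint (P i) (P k)) →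
      Finset.univ.biUnion P = (univ : Finset G) →
      ∏ i, v i (P i) ^ ((n : ℝ)⁻¹) ≤ OPT)
    (hOPTex : ∃ P : A → Finset G, (∀ i k, i ≠ k → Disjoint (P i) (P k)) ∧
      Finset.univ.biUnion P = (univ : Finset G) ∧
      ∏ i, v i (P i) ^ ((n : ℝ)⁻¹) = OPT)
    (τ : A → G) (hτinj : Function.Injective τ)
    (hτopt : ∀ τ' : A → G, Function.Injective τ' →
      ∏ i, v i {τ' i} ^ ((n : ℝ)⁻¹) ≤ ∏ i, v i {τ i} ^ ((n : ℝ)⁻¹))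
    (H J : Finset G) (hH : H = Finset.univ.image τ) (hJ : J = univ \ H)
    (Abar : Finset A) (hAbar : Abar = univ.filter (fun i => 0 < v i J))
    (ℓ : A → G) (hℓ : ∀ i ∈ Abar, ℓ i ∈ J ∧ ∀ j ∈ J, v i {j} ≤ v i {ℓ i})
    (vb : A → Finset G → ℝ) (hvb : ∀ i S, vb i S = v i {ℓ i} + v i S)
    (ε' ε : ℝ) (hε' : 0 ≤ ε') (hε : ε = (1 + ε') ^ m - 1)
    (R : A → Finset G)
    (hRsub : ∀ i, R i ⊆ J) (hRout : ∀ i ∉ Abar, R i = ∅)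
    (hRdisj : ∀ i k, i ≠ k → Disjoint (R i) (R k))
    (hRcover : Abar.biUnion R = J)
    (hloc : ∀ i ∈ Abar, ∀ k ∈ Abar, i ≠ k → ∀ j ∈ R i,
      (vb i ((R i).erase j) / vb i (R i)) *
        (vb k (R k ∪ {j}) / vb k (R k)) ≤ (1 + ε') ^ n) :
    ∃ ρ : A → Option G,
      (∀ (i : A), ∀ g ∈ ρ i, g ∈ H) ∧
      (∀ (i k : A) (g : G), ρ i = some g → ρ k = some g → i = k) ∧
      OPT / (4 * (1 + ε)) ≤ ∏ i, v i (R i ∪ (ρ i).toFinset) ^ ((n : ℝ)⁻¹) := by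
  classical
  obtain ⟨O, hOdisj, hOcov, hOval⟩ := hOPTex
  have hvnn : ∀ i S, 0 ≤ v i S := fun i => v_nonneg (v i) (hmono i) (hv0 i)
  have hn0 : (n:ℝ) ≠ 0 := by
    have : 0 < n := hn1
    exact_mod_cast this.ne'
  have hinv0 : ((n:ℝ)⁻¹) ≠ 0 := inv_ne_zero hn0
  have hinvnn : 0 ≤ ((n:ℝ)⁻¹) := by positivity
  have hinvpos : 0 < ((n:ℝ)⁻¹) := by
    have : (0:ℝ) < n := by exact_mod_cast hn1
    positivity
  -- membership in J vs H
  have hJH : ∀ x : G, x ∈ J ↔ x ∉ H := by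
    intro x; rw [hJ]; simp
  have hτH : ∀ k, τ k ∈ H := by
    intro k; rw [hH]; exact Finset.mem_image_of_mem τ (Finset.mem_univ k)
  -- each optimal bundle has positive value
  have hOpos : ∀ i, 0 < v i (O i) := by
    intro i
    rcases lt_or_ge 0 (v i (O i)) with h | h
    · exact h
    · exfalso
      have hz : v i (O i) = 0 := le_antisymm h (hvnn i (O i))
      have : (∏ k, v k (O k) ^ ((n : ℝ)⁻¹)) = 0 := by
        apply Finset.prod_eq_zero (Finset.mem_univ i)
        rw [hz, Real.zero_rpow hinv0]
      rw [hOval] at this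
      exact absurd this (ne_of_gt hOPTpos)
  -- a positive singleton inside each optimal bundle
  have hxm : ∀ i, ∃ x ∈ O i, 0 < v i {x} := by
    intro i
    by_contra hcon
    push_neg at hcon
    have h1 : v i (O i) ≤ ∑ y ∈ O i, v i {y} :=
      subadd (v i) (hmono i) (hsubmod i) (hv0 i) (O i)
    have h2 : ∑ y ∈ O i, v i {y} ≤ 0 := by
      apply Finset.sum_nonpos
      intro y hy
      exact hcon y hy
    linarith [hOpos i]
  -- comparison against τ for arbitrary injective maps, at the level of plain products
  have hcmp : ∀ π : A → G, Function.Injective π →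
      (∏ x, v x {π x}) ≤ ∏ x, v x {τ x} := by
    intro π hπ
    exact prod_le_of_rpow_le Finset.univ (fun x => v x {π x}) (fun x => v x {τ x}) _ hinvpos
      (fun i _ => hvnn _ _) (fun i _ => hvnn _ _) (hτopt π hπ)
  -- positivity of all τ-values
  have htpos : ∀ i, 0 < v i {τ i} := by
    choose xm hxmO hxmpos using hxm
    have hxminj : Function.Injective xm := by
      intro i k hik
      by_contra hne
      have := Finset.disjoint_left.mp (hOdisj i k hne) (hxmO i)
      rw [hik] at this
      exact this (hxmO k)
    have hle := hcmp xm hxminj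
    have hprodpos : 0 < ∏ x, v x {xm x} :=
      Finset.prod_pos (fun i _ => hxmpos i)
    have hTpos : 0 < ∏ x, v x {τ x} := lt_of_lt_of_le hprodpos hle
    intro i
    rcases lt_or_ge 0 (v i {τ i}) with h | h
    · exact h
    · exfalso
      have hz : v i {τ i} = 0 := le_antisymm h (hvnn i _)
      have : (∏ x, v x {τ x}) = 0 := Finset.prod_eq_zero (Finset.mem_univ i) hz
      rw [this] at hTpos
      exact lt_irrefl _ hTpos
  -- cancellation helper
  have hcancel : ∀ (E : Finset A) (f : A → ℝ), (∀ x ∉ E, f x = v x {τ x}) →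
      ((∏ x, f x) ≤ ∏ x, v x {τ x}) → (∏ x ∈ E, f x) ≤ ∏ x ∈ E, v x {τ x} := by
    intro E f hoff hle
    have h1 : (∏ x ∈ E, f x) * (∏ x ∈ Eᶜ, f x) = ∏ x, f x :=
      Finset.prod_mul_prod_compl E f
    have h2 : (∏ x ∈ E, v x {τ x}) * (∏ x ∈ Eᶜ, v x {τ x}) = ∏ x, v x {τ x} :=
      Finset.prod_mul_prod_compl E (fun x => v x {τ x})
    have h3 : (∏ x ∈ Eᶜ, f x) = ∏ x ∈ Eᶜ, v x {τ x} := by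
      apply Finset.prod_congr rfl
      intro x hx
      exact hoff x (by simpa using hx)
    have hCpos : 0 < ∏ x ∈ Eᶜ, v x {τ x} :=
      Finset.prod_pos (fun i _ => htpos i)
    have := hle
    rw [← h1, ← h2, h3] at this
    exact le_of_mul_le_mul_right this hCpos
  -- the endowment values
  obtain ⟨vl, hvl1, hvl2⟩ : ∃ vl : A → ℝ, (∀ i ∈ Abar, vl i = v i {ℓ i}) ∧ (∀ i ∉ Abar, vl i = 0) :=
    ⟨fun i => if i ∈ Abar then v i {ℓ i} else 0, fun i hi => if_pos hi, fun i hi => if_neg hi⟩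
  have hvlnn : ∀ i, 0 ≤ vl i := by
    intro i
    by_cases hi : i ∈ Abar
    · rw [hvl1 i hi]; exact hvnn _ _
    · rw [hvl2 i hi]
  have hvJ0 : ∀ i ∉ Abar, v i J = 0 := by
    intro i hi
    rw [hAbar] at hi
    simp only [Finset.mem_filter, Finset.mem_univ, true_and, not_lt] at hi
    exact le_antisymm hi (hvnn i J)
  have hvlpos : ∀ i ∈ Abar, 0 < vl i := by
    intro i hi
    have hiJ : 0 < v i J := by
      rw [hAbar] at hi
      simpa using (Finset.mem_filter.mp hi).2
    have h1 : v i J ≤ ∑ y ∈ J, v i {y} := subadd (v i) (hmono i) (hsubmod i) (hv0 i) J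
    by_contra hcon
    push_neg at hcon
    have hvl0 : vl i = 0 := le_antisymm hcon (hvlnn i)
    have h2 : ∑ y ∈ J, v i {y} ≤ 0 := by
      apply Finset.sum_nonpos
      intro y hy
      have := (hℓ i hi).2 y hy
      rw [← hvl1 i hi, hvl0] at this
      exact this
    linarith
  have hvbval : ∀ i ∈ Abar, ∀ S, vb i S = vl i + v i S := by
    intro i hi S; rw [hvb, hvl1 i hi]
  have hvbpos : ∀ i ∈ Abar, ∀ S, 0 < vb i S := by
    intro i hi S
    rw [hvbval i hi]
    have := hvlpos i hi
    have := hvnn i S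
    linarith
  have hvbmono : ∀ i ∈ Abar, ∀ S T : Finset G, S ⊆ T → vb i S ≤ vb i T := by
    intro i hi S T hST
    rw [hvbval i hi, hvbval i hi]
    linarith [hmono i S T hST]
  -- vl i ≤ v i {τ i}
  have hvlt : ∀ i, vl i ≤ v i {τ i} := by
    intro i
    by_cases hi : i ∈ Abar
    · have hlJ : ℓ i ∈ J := (hℓ i hi).1
      have hπ : Function.Injective (Function.update τ i (ℓ i)) := by
        intro x y hxy
        by_cases hx : x = i <;> by_cases hy' : y = i
        · rw [hx, hy']
        · exfalso
          rw [hx] at hxy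
          rw [Function.update_self, Function.update_of_ne hy'] at hxy
          exact ((hJH (ℓ i)).mp hlJ) (hxy ▸ hτH y)
        · exfalso
          rw [hy'] at hxy
          rw [Function.update_self, Function.update_of_ne hx] at hxy
          exact ((hJH (ℓ i)).mp hlJ) (hxy ▸ hτH x)
        · rw [Function.update_of_ne hx, Function.update_of_ne hy'] at hxy
          exact hτinj hxy
      have hle := hcmp _ hπ
      have := hcancel {i} (fun x => v x {Function.update τ i (ℓ i) x})
        (fun x hx => by
          have hxi : x ≠ i := by simpa using hx
          simp [Function.update_of_ne hxi]) hle
      simp only [Finset.prod_singleton, Function.update_self] at this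
      rw [hvl1 i hi]
      exact this
    · rw [hvl2 i hi]; exact hvnn _ _
  -- best H-item of each optimal bundle
  obtain ⟨sg, b, hsgb1, hsgb2⟩ : ∃ (sg : A → G) (b : A → ℝ),
      (∀ i, (O i ∩ H).Nonempty → sg i ∈ O i ∩ H ∧ b i = v i {sg i} ∧
        ∀ h ∈ O i ∩ H, v i {h} ≤ b i) ∧
      (∀ i, ¬(O i ∩ H).Nonempty → b i = 0) := by
    have hch : ∀ i, ∃ (sgi : G) (bi : ℝ),
        ((O i ∩ H).Nonempty → sgi ∈ O i ∩ H ∧ bi = v i {sgi} ∧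
          ∀ h ∈ O i ∩ H, v i {h} ≤ bi) ∧ (¬(O i ∩ H).Nonempty → bi = 0) := by
      intro i
      by_cases hne : (O i ∩ H).Nonempty
      · obtain ⟨x, hx, hmax⟩ := Finset.exists_max_image (O i ∩ H) (fun y => v i {y}) hne
        exact ⟨x, v i {x}, fun _ => ⟨hx, rfl, hmax⟩, fun hc => absurd hne hc⟩
      · exact ⟨τ i, 0, fun hc => absurd hc hne, fun _ => rfl⟩
    choose sg b h1 h2 using hch
    exact ⟨sg, b, h1, h2⟩
  have hbnn : ∀ i, 0 ≤ b i := by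
    intro i
    by_cases hne : (O i ∩ H).Nonempty
    · rw [(hsgb1 i hne).2.1]; exact hvnn _ _
    · rw [hsgb2 i hne]
  -- c values
  have hsumH : ∀ i, (∑ h ∈ O i ∩ H, v i {h}) ≤ ((O i ∩ H).card : ℝ) * b i := by
    intro i
    by_cases hne : (O i ∩ H).Nonempty
    · calc (∑ h ∈ O i ∩ H, v i {h}) ≤ ∑ _h ∈ O i ∩ H, b i :=
            Finset.sum_le_sum (fun h hh => (hsgb1 i hne).2.2 h hh)
        _ = ((O i ∩ H).card : ℝ) * b i := by rw [Finset.sum_const, nsmul_eq_mul]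
    · rw [Finset.not_nonempty_iff_eq_empty] at hne
      rw [hne]; simp
  -- the per-agent decomposition of the optimum value
  have hOJH : ∀ i, v i (O i) ≤ v i (O i ∩ J) + ∑ h ∈ O i ∩ H, v i {h} := by
    intro i
    have hsplit := sub1' (v i) (hmono i) (hsubmod i) (hv0 i) (O i ∩ J) (O i)
    have hset : O i \ (O i ∩ J) = O i ∩ H := by
      ext x
      have hx := hJH x
      simp only [Finset.mem_sdiff, Finset.mem_inter, not_and]
      tauto
    rw [hset] at hsplit
    have hterm : ∀ j ∈ O i ∩ H, v i ((O i ∩ J) ∪ {j}) - v i (O i ∩ J) ≤ v i {j} := by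
      intro j _
      linarith [marg_single (v i) (hmono i) (hsubmod i) (hv0 i) (O i ∩ J) j]
    calc v i (O i) ≤ v i (O i ∩ J) + ∑ j ∈ O i ∩ H, (v i ((O i ∩ J) ∪ {j}) - v i (O i ∩ J)) :=
          hsplit
      _ ≤ v i (O i ∩ J) + ∑ j ∈ O i ∩ H, v i {j} := by
          have := Finset.sum_le_sum hterm
          linarith
  have haJ0 : ∀ i ∉ Abar, v i (O i ∩ J) = 0 := by
    intro i hi
    have h1 : v i (O i ∩ J) ≤ v i J := hmono i _ _ Finset.inter_subset_right
    have h2 := hvnn i (O i ∩ J)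
    rw [hvJ0 i hi] at h1
    linarith
  have hbposout : ∀ i ∉ Abar, 0 < b i := by
    intro i hi
    have h1 := hOJH i
    rw [haJ0 i hi] at h1
    have h2 := hsumH i
    have h3 := hOpos i
    have hb := hbnn i
    rcases lt_or_ge 0 (b i) with h | h
    · exact h
    · exfalso
      have hb0 : b i = 0 := le_antisymm h hb
      rw [hb0, mul_zero] at h2
      linarith
  -- the set of agents whose best-H-item demand exceeds their base
  obtain ⟨B, hB⟩ : ∃ B : Finset A, ∀ i, i ∈ B ↔ max (v i (R i)) (vl i) < b i :=
    ⟨Finset.univ.filter (fun i => max (v i (R i)) (vl i) < b i), fun i => by simp⟩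
  have hAbarB : ∀ i ∉ Abar, i ∈ B := by
    intro i hi
    rw [hB]
    rw [hRout i hi, hv0 i, hvl2 i hi]
    simpa using hbposout i hi
  have hBne : ∀ i ∈ B, (O i ∩ H).Nonempty := by
    intro i hi
    by_contra hne
    have hb0 := hsgb2 i hne
    rw [hB] at hi
    rw [hb0] at hi
    have h1 := hvnn i (R i)
    have h2 := hvlnn i
    have := le_max_left (v i (R i)) (vl i)
    linarith [lt_of_le_of_lt (le_max_left (v i (R i)) (vl i)) hi]
  -- the demand function
  obtain ⟨d, hdB, hdnB⟩ : ∃ d : A → ℝ, (∀ i ∈ B, d i = b i) ∧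
      (∀ i ∉ B, d i = max (v i (R i)) (vl i)) :=
    ⟨fun i => if i ∈ B then b i else max (v i (R i)) (vl i),
      fun i hi => if_pos hi, fun i hi => if_neg hi⟩
  have hd_ge : ∀ i, max (v i (R i)) (vl i) ≤ d i := by
    intro i
    by_cases hi : i ∈ B
    · rw [hdB i hi]; exact le_of_lt ((hB i).mp hi)
    · rw [hdnB i hi]
  have hd_b : ∀ i, b i ≤ d i := by
    intro i
    by_cases hi : i ∈ B
    · rw [hdB i hi]
    · rw [hdnB i hi]
      rw [hB] at hi
      exact le_of_not_gt hi
  have hdpos : ∀ i, 0 < d i := by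
    intro i
    by_cases hi : i ∈ Abar
    · calc (0:ℝ) < vl i := hvlpos i hi
        _ ≤ max (v i (R i)) (vl i) := le_max_right _ _
        _ ≤ d i := hd_ge i
    · calc (0:ℝ) < b i := hbposout i hi
        _ ≤ d i := hd_b i
  -- the holder of each item of J
  have hAne : Nonempty A := by
    rw [← Fintype.card_pos_iff, ← hn]; exact hn1
  obtain ⟨hold, hhold⟩ : ∃ hold : G → A, ∀ j ∈ J, hold j ∈ Abar ∧ j ∈ R (hold j) := by
    refine ⟨fun j => if h : ∃ k ∈ Abar, j ∈ R k then h.choose else Classical.arbitrary A, ?_⟩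
    intro j hj
    have hex : ∃ k ∈ Abar, j ∈ R k := by
      have : j ∈ Abar.biUnion R := by rw [hRcover]; exact hj
      simpa using Finset.mem_biUnion.mp this
    dsimp only
    rw [dif_pos hex]
    exact ⟨hex.choose_spec.1, hex.choose_spec.2⟩
  have hholdu : ∀ j k, k ∈ Abar → j ∈ R k → hold j = k := by
    intro j k hk hjk
    have hjJ : j ∈ J := hRsub k hjk
    obtain ⟨h1, h2⟩ := hhold j hjJ
    by_contra hne
    exact Finset.disjoint_left.mp (hRdisj (hold j) k hne) h2 hjk
  -- the removal ratios
  obtain ⟨θ, hθ⟩ : ∃ θ : G → ℝ, ∀ j,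
      θ j = vb (hold j) (R (hold j)) / vb (hold j) ((R (hold j)).erase j) :=
    ⟨_, fun _ => rfl⟩
  have hθ1 : ∀ j ∈ J, 1 ≤ θ j := by
    intro j hj
    obtain ⟨hk, hjk⟩ := hhold j hj
    rw [hθ j]
    have hEpos : 0 < vb (hold j) ((R (hold j)).erase j) := hvbpos _ hk _
    exact (one_le_div hEpos).mpr
      (hvbmono _ hk _ _ (Finset.erase_subset j (R (hold j))))
  obtain ⟨t', ht'⟩ : ∃ x : ℝ, x = (1 + ε') ^ n := ⟨_, rfl⟩
  obtain ⟨sε, hsε⟩ : ∃ x : ℝ, x = (1 + ε') ^ m := ⟨_, rfl⟩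
  have hone : (1:ℝ) ≤ 1 + ε' := by linarith
  have ht'1 : 1 ≤ t' := by rw [ht']; exact one_le_pow₀ hone
  have hsε1 : 1 ≤ sε := by rw [hsε]; exact one_le_pow₀ hone
  have hεs : 1 + ε = sε := by rw [hε, hsε]; ring
  have ht'θ : ∀ j ∈ J, 1 ≤ t' * θ j := by
    intro j hj
    calc (1:ℝ) = 1 * 1 := by ring
      _ ≤ t' * θ j := mul_le_mul ht'1 (hθ1 j hj) zero_le_one (by linarith)
  -- the key marginal-value bound from local optimality
  have hmarg : ∀ i ∈ Abar, ∀ j ∈ (O i ∩ J) \ R i,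
      v i (R i ∪ {j}) - v i (R i) ≤ (t' * θ j - 1) * vb i (R i) := by
    intro i hi j hj
    rw [Finset.mem_sdiff, Finset.mem_inter] at hj
    obtain ⟨⟨hjO, hjJ⟩, hjR⟩ := hj
    obtain ⟨hkA, hjk⟩ := hhold j hjJ
    have hki : hold j ≠ i := by
      intro hcon
      rw [hcon] at hjk
      exact hjR hjk
    have hlc := hloc (hold j) hkA i hi hki j hjk
    rw [← ht'] at hlc
    have hX : 0 < vb (hold j) ((R (hold j)).erase j) := hvbpos _ hkA _
    have hY : 0 < vb (hold j) (R (hold j)) := hvbpos _ hkA _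
    have hW : 0 < vb i (R i) := hvbpos _ hi _
    have hZ : 0 < vb i (R i ∪ {j}) := hvbpos _ hi _
    rw [div_mul_div_comm, div_le_iff₀ (by positivity)] at hlc
    -- hlc : X * Z ≤ t' * (Y * W)
    have h2 : vb i (R i ∪ {j}) ≤ (t' * θ j) * vb i (R i) := by
      rw [hθ j]
      rw [mul_comm t' _, mul_assoc, div_mul_eq_mul_div, le_div_iff₀ hX, mul_comm]
      calc vb (hold j) ((R (hold j)).erase j) * vb i (R i ∪ {j})
          ≤ t' * (vb (hold j) (R (hold j)) * vb i (R i)) := hlc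
        _ = vb (hold j) (R (hold j)) * (t' * vb i (R i)) := by ring
    have hZW : vb i (R i ∪ {j}) - vb i (R i) = v i (R i ∪ {j}) - v i (R i) := by
      rw [hvbval i hi, hvbval i hi]; ring
    linarith
  -- moved item sets
  obtain ⟨Qd, hQd⟩ : ∃ q : A → Finset G, ∀ i, q i = (O i ∩ J) \ R i := ⟨_, fun _ => rfl⟩
  have hQdJ : ∀ i, Qd i ⊆ J := by
    intro i
    rw [hQd]
    exact Finset.Subset.trans Finset.sdiff_subset Finset.inter_subset_right
  obtain ⟨SQ, hSQ⟩ : ∃ f : A → ℝ, ∀ i, f i = ∑ j ∈ Qd i, (t' * θ j - 1) := ⟨_, fun _ => rfl⟩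
  have hSQnn : ∀ i, 0 ≤ SQ i := by
    intro i
    rw [hSQ]
    apply Finset.sum_nonneg
    intro j hj
    linarith [ht'θ j (hQdJ i hj)]
  obtain ⟨w, hw⟩ : ∃ w : A → ℝ, ∀ i,
      w i = (if i ∈ Abar then v i (R i) + SQ i * vb i (R i) else 0)
        + ((O i ∩ H).card : ℝ) * b i := ⟨_, fun _ => rfl⟩
  have hOw : ∀ i, v i (O i) ≤ w i := by
    intro i
    have h1 := hOJH i
    have hHc := hsumH i
    rw [hw]
    by_cases hi : i ∈ Abar
    · rw [if_pos hi]
      have h2 := sub1' (v i) (hmono i) (hsubmod i) (hv0 i) (R i) (O i ∩ J)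
      have h3 : (∑ j ∈ Qd i, (v i (R i ∪ {j}) - v i (R i)))
          ≤ ∑ j ∈ Qd i, (t' * θ j - 1) * vb i (R i) := by
        apply Finset.sum_le_sum
        intro j hj
        rw [hQd i] at hj
        exact hmarg i hi j hj
      have h4 : (∑ j ∈ Qd i, (t' * θ j - 1) * vb i (R i)) = SQ i * vb i (R i) := by
        rw [hSQ, Finset.sum_mul]
      rw [← hQd i] at h2
      linarith
    · rw [if_neg hi]
      rw [haJ0 i hi] at h1
      linarith
  have hwnn : ∀ i, 0 ≤ w i := by
    intro i
    rw [hw]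
    have hc : (0:ℝ) ≤ ((O i ∩ H).card : ℝ) := Nat.cast_nonneg _
    have hcb : 0 ≤ ((O i ∩ H).card : ℝ) * b i := mul_nonneg hc (hbnn i)
    by_cases hi : i ∈ Abar
    · rw [if_pos hi]
      have := hvnn i (R i)
      have := mul_nonneg (hSQnn i) (le_of_lt (hvbpos i hi (R i)))
      linarith
    · rw [if_neg hi]; linarith
  obtain ⟨z, hz⟩ : ∃ z : A → ℝ, ∀ i, z i = w i / d i := ⟨_, fun _ => rfl⟩
  have hznn : ∀ i, 0 ≤ z i := fun i => by
    rw [hz]; exact div_nonneg (hwnn i) (le_of_lt (hdpos i))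
  have hzd : ∀ i, z i * d i = w i := fun i => by
    rw [hz]; exact div_mul_cancel₀ _ (ne_of_gt (hdpos i))
  have hzb : ∀ i, z i ≤ (1 + ((O i ∩ H).card:ℝ)) + 2 * (if i ∈ Abar then SQ i else 0) := by
    intro i
    rw [hz, div_le_iff₀ (hdpos i), hw]
    have h3 : b i ≤ d i := hd_b i
    have h5 : (0:ℝ) ≤ ((O i ∩ H).card : ℝ) := Nat.cast_nonneg _
    have hcb : ((O i ∩ H).card : ℝ) * b i ≤ ((O i ∩ H).card : ℝ) * d i :=
      mul_le_mul_of_nonneg_left h3 h5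
    by_cases hi : i ∈ Abar
    · rw [if_pos hi, if_pos hi]
      have h1 : v i (R i) ≤ d i := le_trans (le_max_left _ _) (hd_ge i)
      have h2 : vb i (R i) ≤ 2 * d i := by
        rw [hvbval i hi]
        have ha := le_trans (le_max_left (v i (R i)) (vl i)) (hd_ge i)
        have hb := le_trans (le_max_right (v i (R i)) (vl i)) (hd_ge i)
        linarith
      have h4 : SQ i * vb i (R i) ≤ SQ i * (2 * d i) :=
        mul_le_mul_of_nonneg_left h2 (hSQnn i)
      nlinarith
    · rw [if_neg hi, if_neg hi]
      have := hdpos i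
      nlinarith
  -- counting: ∑ c = n
  have hHbi : H = Finset.univ.biUnion (fun i => O i ∩ H) := by
    ext x
    simp only [Finset.mem_biUnion, Finset.mem_univ, true_and, Finset.mem_inter]
    constructor
    · intro hx
      have hxu : x ∈ Finset.univ.biUnion O := by rw [hOcov]; exact Finset.mem_univ x
      obtain ⟨i, _, hxi⟩ := Finset.mem_biUnion.mp hxu
      exact ⟨i, hxi, hx⟩
    · rintro ⟨i, _, hx⟩; exact hx
  have hHcard : H.card = n := by
    rw [hH, Finset.card_image_of_injective _ hτinj, Finset.card_univ, hn]
  have hcardsum : ∑ i, (O i ∩ H).card = n := by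
    rw [← hHcard]
    conv_rhs => rw [hHbi]
    exact (Finset.card_biUnion (fun i _ k _ hik =>
      Finset.disjoint_of_subset_left Finset.inter_subset_left
        (Finset.disjoint_of_subset_right Finset.inter_subset_left (hOdisj i k hik)))).symm
  have hsumc : (∑ i, ((O i ∩ H).card : ℝ)) = (n:ℝ) := by
    exact_mod_cast hcardsum
  -- regrouped bound on removal ratios
  have hQdDisj : (↑Abar : Set A).PairwiseDisjoint Qd := by
    intro i _ k _ hik
    simp only [Function.onFun]
    rw [hQd i, hQd k]
    exact Finset.disjoint_of_subset_left (Finset.sdiff_subset.trans Finset.inter_subset_left)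
      (Finset.disjoint_of_subset_right (Finset.sdiff_subset.trans Finset.inter_subset_left)
        (hOdisj i k hik))
  have hsum1 : (∑ i ∈ Abar, ∑ j ∈ Qd i, (θ j - 1)) = ∑ j ∈ Abar.biUnion Qd, (θ j - 1) :=
    (Finset.sum_biUnion hQdDisj).symm
  have hFRdisj : (↑Abar : Set A).PairwiseDisjoint (fun k => (Abar.biUnion Qd) ∩ R k) := by
    intro i _ k _ hik
    simp only [Function.onFun]
    exact Finset.disjoint_of_subset_left Finset.inter_subset_right
      (Finset.disjoint_of_subset_right Finset.inter_subset_right (hRdisj i k hik))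
  have hFR : Abar.biUnion Qd = Abar.biUnion (fun k => (Abar.biUnion Qd) ∩ R k) := by
    ext j
    simp only [Finset.mem_biUnion, Finset.mem_inter]
    constructor
    · rintro ⟨i, hiA, hji⟩
      have hjJ : j ∈ J := hQdJ i hji
      obtain ⟨h1, h2⟩ := hhold j hjJ
      exact ⟨hold j, h1, ⟨i, hiA, hji⟩, h2⟩
    · rintro ⟨k, _, ⟨i, hiA, hji⟩, _⟩
      exact ⟨i, hiA, hji⟩
  have hsum3 : ∀ k ∈ Abar, (∑ j ∈ (Abar.biUnion Qd) ∩ R k, (θ j - 1)) ≤ 1 := by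
    intro k hk
    have hMxpos : 0 < max (vl k) (v k (R k)) :=
      lt_of_lt_of_le (hvlpos k hk) (le_max_left _ _)
    have hpoint : ∀ j ∈ (Abar.biUnion Qd) ∩ R k,
        θ j - 1 ≤ (vb k (R k) - vb k ((R k).erase j)) / max (vl k) (v k (R k)) := by
      intro j hjT
      have hjR : j ∈ R k := (Finset.mem_inter.mp hjT).2
      have hje : hold j = k := hholdu j k hk hjR
      have hjJ : j ∈ J := hRsub k hjR
      have hE : 0 < vb k ((R k).erase j) := hvbpos k hk _
      have hEM : max (vl k) (v k (R k)) ≤ vb k ((R k).erase j) := by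
        rw [hvbval k hk]
        apply max_le
        · linarith [hvnn k ((R k).erase j)]
        · have hmu : (R k).erase j ∪ {j} = R k := by
            have he2 : (R k).erase j ∪ {j} = insert j ((R k).erase j) := by
              ext x; simp [or_comm]
            rw [he2, Finset.insert_erase hjR]
          have hms := marg_single (v k) (hmono k) (hsubmod k) (hv0 k) ((R k).erase j) j
          rw [hmu] at hms
          have hvj : v k {j} ≤ vl k := by
            rw [hvl1 k hk]; exact (hℓ k hk).2 j hjJ
          linarith
      have h1 : θ j - 1 = (vb k (R k) - vb k ((R k).erase j)) / vb k ((R k).erase j) := by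
        rw [hθ j, hje]
        field_simp
      rw [h1]
      have hnum : 0 ≤ vb k (R k) - vb k ((R k).erase j) := by
        linarith [hvbmono k hk _ _ (Finset.erase_subset j (R k))]
      exact div_le_div_of_nonneg_left hnum hMxpos hEM
    have hsumpoint := Finset.sum_le_sum hpoint
    have hcongr : (∑ j ∈ (Abar.biUnion Qd) ∩ R k, (vb k (R k) - vb k ((R k).erase j)))
        = ∑ j ∈ (Abar.biUnion Qd) ∩ R k, (v k (R k) - v k ((R k).erase j)) := by
      apply Finset.sum_congr rfl
      intro j _
      rw [hvbval k hk, hvbval k hk]; ring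
    have hsub2app := sub2 (v k) (hmono k) (hsubmod k) (hv0 k) (R k)
      ((Abar.biUnion Qd) ∩ R k) Finset.inter_subset_right
    have hnum2 : (∑ j ∈ (Abar.biUnion Qd) ∩ R k, (v k (R k) - v k ((R k).erase j)))
        ≤ v k (R k) := by
      have := hvnn k (R k \ ((Abar.biUnion Qd) ∩ R k))
      linarith
    calc (∑ j ∈ (Abar.biUnion Qd) ∩ R k, (θ j - 1))
        ≤ ∑ j ∈ (Abar.biUnion Qd) ∩ R k,
            (vb k (R k) - vb k ((R k).erase j)) / max (vl k) (v k (R k)) := hsumpoint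
      _ = (∑ j ∈ (Abar.biUnion Qd) ∩ R k, (vb k (R k) - vb k ((R k).erase j)))
            / max (vl k) (v k (R k)) := by rw [Finset.sum_div]
      _ ≤ v k (R k) / max (vl k) (v k (R k)) := by
          apply div_le_div_of_nonneg_right _ (le_of_lt hMxpos)
          rw [hcongr]
          exact hnum2
      _ ≤ 1 := by
          rw [div_le_one hMxpos]
          exact le_max_right _ _
  have hAbarcard : ((Abar.card : ℝ)) ≤ (n:ℝ) := by
    have : Abar.card ≤ Fintype.card A := Finset.card_le_univ Abar
    rw [← hn] at this
    exact_mod_cast this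
  have hSθsum : (∑ i ∈ Abar, ∑ j ∈ Qd i, (θ j - 1)) ≤ (n:ℝ) := by
    rw [hsum1]
    conv_lhs => rw [hFR]
    rw [Finset.sum_biUnion hFRdisj]
    calc (∑ k ∈ Abar, ∑ j ∈ (Abar.biUnion Qd) ∩ R k, (θ j - 1))
        ≤ ∑ _k ∈ Abar, (1:ℝ) := Finset.sum_le_sum hsum3
      _ = (Abar.card : ℝ) := by rw [Finset.sum_const, nsmul_eq_mul, mul_one]
      _ ≤ (n:ℝ) := hAbarcard
  have hcount : (∑ i ∈ Abar, ((Qd i).card : ℝ)) ≤ (m:ℝ) := by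
    have h1 : ∑ i ∈ Abar, (Qd i).card = (Abar.biUnion Qd).card := by
      rw [Finset.card_biUnion]
      intro i hi k hk hik
      exact hQdDisj (Finset.mem_coe.mpr hi) (Finset.mem_coe.mpr hk) hik
    have h2 : (Abar.biUnion Qd).card ≤ Fintype.card G := Finset.card_le_univ _
    rw [← hm] at h2
    have : (∑ i ∈ Abar, (Qd i).card) ≤ m := le_trans (le_of_eq h1) h2
    calc (∑ i ∈ Abar, ((Qd i).card : ℝ)) = ((∑ i ∈ Abar, (Qd i).card : ℕ) : ℝ) := by
          rw [Nat.cast_sum]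
      _ ≤ (m:ℝ) := by exact_mod_cast this
  have hSQsum : (∑ i ∈ Abar, SQ i) ≤ t' * (n:ℝ) + (t' - 1) * (m:ℝ) := by
    have hsplit : ∀ i ∈ Abar, SQ i
        = t' * (∑ j ∈ Qd i, (θ j - 1)) + (t' - 1) * ((Qd i).card : ℝ) := by
      intro i _
      rw [hSQ]
      have hterm : ∀ j ∈ Qd i, t' * θ j - 1 = t' * (θ j - 1) + (t' - 1) := fun j _ => by ring
      rw [Finset.sum_congr rfl hterm, Finset.sum_add_distrib, Finset.sum_const,
        ← Finset.mul_sum, nsmul_eq_mul]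
      ring
    rw [Finset.sum_congr rfl hsplit, Finset.sum_add_distrib, ← Finset.mul_sum, ← Finset.mul_sum]
    have hA := hSθsum
    have hB := hcount
    have hsum_nonneg : 0 ≤ ∑ i ∈ Abar, ∑ j ∈ Qd i, (θ j - 1) := by
      apply Finset.sum_nonneg; intro i hi
      apply Finset.sum_nonneg; intro j hj
      linarith [hθ1 j (hQdJ i hj)]
    have h1 : t' * (∑ i ∈ Abar, ∑ j ∈ Qd i, (θ j - 1)) ≤ t' * (n:ℝ) :=
      mul_le_mul_of_nonneg_left hA (by linarith)
    have h2 : (t' - 1) * (∑ i ∈ Abar, ((Qd i).card:ℝ)) ≤ (t' - 1) * (m:ℝ) :=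
      mul_le_mul_of_nonneg_left hB (by linarith)
    linarith
  have hsumz : (∑ i, z i) ≤ 4 * sε * (n:ℝ) := by
    have h1 := Finset.sum_le_sum (fun i (_ : i ∈ (Finset.univ : Finset A)) => hzb i)
    have h2 : (∑ i : A, ((1:ℝ) + ((O i ∩ H).card:ℝ)
        + 2 * (if i ∈ Abar then SQ i else 0)))
        = (n:ℝ) + (n:ℝ) + 2 * (∑ i ∈ Abar, SQ i) := by
      rw [Finset.sum_add_distrib, Finset.sum_add_distrib, hsumc]
      congr 1
      · congr 1
        rw [Finset.sum_const, Finset.card_univ, ← hn, nsmul_eq_mul, mul_one]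
      · rw [← Finset.mul_sum]
        congr 1
        rw [Finset.sum_ite_mem, Finset.univ_inter]
    have h5 : t' ≤ sε := by rw [ht', hsε]; exact pow_le_pow_right₀ hone hnm
    have h6 : (t' - 1) * (m:ℝ) ≤ (sε - 1) * (n:ℝ) := by
      have hg := geom_aux (1+ε') hone hnm
      rw [← ht', ← hsε] at hg
      nlinarith [hg]
    have hnpos : (0:ℝ) < n := by exact_mod_cast hn1
    have h7 : t' * (n:ℝ) ≤ sε * (n:ℝ) := mul_le_mul_of_nonneg_right h5 (le_of_lt hnpos)
    have h8 : (∑ i ∈ Abar, SQ i) ≤ sε * (n:ℝ) + (sε - 1) * (n:ℝ) := by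
      linarith [hSQsum]
    rw [h2] at h1
    nlinarith [h1, h8]
  -- σ properties on B
  have hsginj : ∀ i ∈ B, ∀ k ∈ B, sg i = sg k → i = k := by
    intro i hi k hk he
    by_contra hne
    have h1 := (hsgb1 i (hBne i hi)).1
    have h2 := (hsgb1 k (hBne k hk)).1
    have hd := hOdisj i k hne
    have h1' : sg i ∈ O i := (Finset.mem_inter.mp h1).1
    have h2' : sg k ∈ O k := (Finset.mem_inter.mp h2).1
    exact Finset.disjoint_left.mp hd h1' (he ▸ h2')
  have hsgH : ∀ i ∈ B, sg i ∈ H := fun i hi => (Finset.mem_inter.mp (hsgb1 i (hBne i hi)).1).2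
  have hbval : ∀ i ∈ B, b i = v i {sg i} := fun i hi => (hsgb1 i (hBne i hi)).2.1
  obtain ⟨g, hg⟩ : ∃ g : A → A, ∀ i ∈ B, τ (g i) = sg i := by
    refine ⟨fun i => if h : ∃ k, τ k = sg i then h.choose else Classical.arbitrary A, ?_⟩
    intro i hi
    have hex : ∃ k, τ k = sg i := by
      have hx := hsgH i hi
      rw [hH] at hx
      obtain ⟨k, _, hk⟩ := Finset.mem_image.mp hx
      exact ⟨k, hk⟩
    dsimp only
    rw [dif_pos hex]
    exact hex.choose_spec
  obtain ⟨P, hP⟩ : ∃ P : A → ℕ → Prop, ∀ i s, P i s ↔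
      ((∀ r ≤ s, g^[r] i ∈ B) ∧ g^[s+1] i ∉ B ∧
        v (g^[s+1] i) (R (g^[s+1] i)) < vl (g^[s+1] i)) :=
    ⟨_, fun _ _ => Iff.rfl⟩
  obtain ⟨W, hW⟩ : ∃ W : Finset A, ∀ i, i ∈ W ↔ (i ∈ B ∧ ∃ s, P i s) :=
    ⟨Finset.univ.filter (fun i => i ∈ B ∧ ∃ s, P i s), fun i => by simp⟩
  have hPuniq : ∀ i s s', P i s → P i s' → s = s' := by
    intro i s s' hs hs'
    rw [hP] at hs hs'
    by_contra hne
    rcases Nat.lt_or_ge s s' with hlt | hge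
    · exact hs.2.1 (hs'.1 (s+1) (Nat.succ_le_of_lt hlt))
    · have hlt : s' < s := lt_of_le_of_ne hge (Ne.symm hne)
      exact hs'.2.1 (hs.1 (s'+1) (Nat.succ_le_of_lt hlt))
  obtain ⟨head, hhead⟩ : ∃ hd : A → A, ∀ i s, P i s → hd i = g^[s+1] i := by
    refine ⟨fun i => if h : ∃ s, P i s then g^[h.choose+1] i else i, ?_⟩
    intro i s hs
    have hex : ∃ s, P i s := ⟨s, hs⟩
    dsimp only
    rw [dif_pos hex]
    rw [hPuniq i _ _ hex.choose_spec hs]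
  obtain ⟨D, hD⟩ : ∃ D : Finset A, ∀ i, i ∈ D ↔ (i ∈ B ∧ i ∉ W) :=
    ⟨B \ W, fun i => by simp [Finset.mem_sdiff]⟩
  have hshift : ∀ i s, P i (s+1) → (g i ∈ B ∧ P (g i) s ∧ head (g i) = head i) := by
    intro i s hs
    have hs0 := hs
    rw [hP] at hs
    obtain ⟨hall, hout, hty⟩ := hs
    have hgB : g i ∈ B := by
      have h1 := hall 1 (by omega)
      rwa [Function.iterate_one] at h1
    have hPg : P (g i) s := by
      rw [hP]
      refine ⟨?_, ?_, ?_⟩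
      · intro r hr
        have h1 := hall (r+1) (by omega)
        rwa [Function.iterate_succ_apply] at h1
      · have h1 : g^[s+1+1] i = g^[s+1] (g i) := Function.iterate_succ_apply g (s+1) i
        rw [← h1]; exact hout
      · have h1 : g^[s+1+1] i = g^[s+1] (g i) := Function.iterate_succ_apply g (s+1) i
        rw [← h1]; exact hty
    refine ⟨hgB, hPg, ?_⟩
    rw [hhead (g i) s hPg, hhead i (s+1) hs0]
    exact (Function.iterate_succ_apply g (s+1) i).symm
  have hzero : ∀ i, P i 0 →
      (g i = head i ∧ g i ∉ B ∧ v (g i) (R (g i)) < vl (g i)) := by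
    intro i h0
    have hh := hhead i 0 h0
    rw [hP] at h0
    have h1 : g^[0+1] i = g i := Function.iterate_one g ▸ rfl
    refine ⟨?_, ?_, ?_⟩
    · rw [hh, h1]
    · rw [← h1]; exact h0.2.1
    · rw [← h1]; exact h0.2.2
  have hprepend0 : ∀ l ∈ B, g l ∉ B → v (g l) (R (g l)) < vl (g l) → P l 0 := by
    intro l hl hgB hty
    rw [hP]
    have h1 : g^[0+1] l = g l := Function.iterate_one g ▸ rfl
    refine ⟨?_, ?_, ?_⟩
    · intro r hr
      interval_cases r
      simpa using hl
    · rw [h1]; exact hgB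
    · rw [h1]; exact hty
  have hprepend : ∀ l ∈ B, ∀ s, P (g l) s → P l (s+1) := by
    intro l hl s hs
    rw [hP] at hs ⊢
    obtain ⟨hall, hout, hty⟩ := hs
    refine ⟨?_, ?_, ?_⟩
    · intro r hr
      match r with
      | 0 => simpa using hl
      | (r'+1) =>
        rw [Function.iterate_succ_apply]
        exact hall r' (by omega)
    · rw [Function.iterate_succ_apply]
      exact hout
    · rw [Function.iterate_succ_apply, Function.iterate_succ_apply]
      rw [Function.iterate_succ_apply] at hty
      exact hty
  have hDclosed : ∀ l ∈ D, g l ∈ B → g l ∈ D := by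
    intro l hl hgB
    rw [hD] at hl ⊢
    refine ⟨hgB, ?_⟩
    intro hgW
    obtain ⟨_, s, hs⟩ := (hW _).mp hgW
    exact hl.2 ((hW l).mpr ⟨hl.1, s+1, hprepend l hl.1 s hs⟩)
  have hDexit : ∀ l ∈ D, g l ∉ B → ¬(v (g l) (R (g l)) < vl (g l)) := by
    intro l hl hgB hty
    rw [hD] at hl
    exact hl.2 ((hW l).mpr ⟨hl.1, 0, hprepend0 l hl.1 hgB hty⟩)
  obtain ⟨Hd, hHd⟩ : ∃ Hd : Finset A, Hd = W.image head := ⟨_, rfl⟩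
  have hHdprop : ∀ a ∈ Hd, a ∉ B ∧ v a (R a) < vl a := by
    intro a ha
    rw [hHd] at ha
    obtain ⟨i, hiW, hih⟩ := Finset.mem_image.mp ha
    obtain ⟨hiB, s, hs⟩ := (hW i).mp hiW
    have hh := hhead i s hs
    rw [hP] at hs
    rw [← hih, hh]
    exact ⟨hs.2.1, hs.2.2⟩
  have hHdAbar : ∀ a ∈ Hd, a ∈ Abar := by
    intro a ha
    by_contra hcon
    exact (hHdprop a ha).1 (hAbarB a hcon)
  have hPa_g : ∀ a, ∀ i ∈ W.filter (fun x => head x = a),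
      g i ∈ W.filter (fun x => head x = a) ∨ g i = a := by
    intro a i hi
    rw [Finset.mem_filter] at hi
    obtain ⟨hiW, hih⟩ := hi
    obtain ⟨hiB, s, hs⟩ := (hW i).mp hiW
    match s with
    | 0 =>
      right
      rw [← hih]
      exact (hzero i hs).1
    | (s'+1) =>
      left
      obtain ⟨hgB, hPg, hh⟩ := hshift i s' hs
      rw [Finset.mem_filter]
      exact ⟨(hW _).mpr ⟨hgB, s', hPg⟩, by rw [hh, hih]⟩
  obtain ⟨SD, hSD⟩ : ∃ SD : Finset G, ∀ x, x ∈ SD ↔ ∃ l ∈ D, sg l = x :=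
    ⟨D.image sg, fun x => by simp⟩
  obtain ⟨ρ, hρ1, hρ2, hρ3⟩ : ∃ ρ : A → Option G,
      (∀ i ∈ D, ρ i = some (sg i)) ∧ (∀ i ∉ D, τ i ∈ SD → ρ i = none) ∧
      (∀ i ∉ D, τ i ∉ SD → ρ i = some (τ i)) := by
    refine ⟨fun i => if i ∈ D then some (sg i) else if τ i ∈ SD then none else some (τ i),
      ?_, ?_, ?_⟩
    · intro i hi; dsimp only; rw [if_pos hi]
    · intro i hi hti; dsimp only; rw [if_neg hi, if_pos hti]
    · intro i hi hti; dsimp only; rw [if_neg hi, if_neg hti]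
  have hblk : ∀ k, τ k ∈ SD → ∃ l ∈ D, g l = k := by
    intro k hk
    obtain ⟨l, hl, he⟩ := (hSD _).mp hk
    refine ⟨l, hl, ?_⟩
    have hgl := hg l ((hD l).mp hl).1
    apply hτinj
    rw [hgl, he]
  have hWnb : ∀ i ∈ W, τ i ∉ SD := by
    intro i hiW hti
    obtain ⟨l, hlD, hgl⟩ := hblk _ hti
    have hiB : i ∈ B := ((hW i).mp hiW).1
    have hgi : g l ∈ D := hDclosed l hlD (by rw [hgl]; exact hiB)
    rw [hgl] at hgi
    exact ((hD i).mp hgi).2 hiW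
  have hHdnb : ∀ a ∈ Hd, τ a ∉ SD := by
    intro a ha hta
    obtain ⟨l, hlD, hgl⟩ := hblk _ hta
    obtain ⟨haB, haty⟩ := hHdprop a ha
    have hne : ¬(v (g l) (R (g l)) < vl (g l)) :=
      hDexit l hlD (by rw [hgl]; exact haB)
    rw [hgl] at hne
    exact hne haty
  have hblktype : ∀ k ∉ D, τ k ∈ SD → (k ∉ B ∧ ¬(v k (R k) < vl k)) := by
    intro k hkD hk
    obtain ⟨l, hlD, hgl⟩ := hblk _ hk
    have hkB : k ∉ B := by
      intro hkB
      have := hDclosed l hlD (by rw [hgl]; exact hkB)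
      rw [hgl] at this
      exact hkD this
    refine ⟨hkB, ?_⟩
    have := hDexit l hlD (by rw [hgl]; exact hkB)
    rwa [hgl] at this
  -- the supply of each agent
  obtain ⟨sup, hsup⟩ : ∃ f : A → ℝ, ∀ i, f i = v i (R i ∪ (ρ i).toFinset) := ⟨_, fun _ => rfl⟩
  have hsupnn : ∀ i, 0 ≤ sup i := fun i => by rw [hsup]; exact hvnn _ _
  have hsupD : ∀ i ∈ D, b i ≤ sup i := by
    intro i hi
    rw [hsup, hρ1 i hi]
    have hiB : i ∈ B := ((hD i).mp hi).1
    rw [hbval i hiB]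
    apply hmono
    intro x hx
    rw [Finset.mem_singleton] at hx
    subst hx
    apply Finset.mem_union_right
    simp
  have hsupτ : ∀ i, ρ i = some (τ i) → max (v i (R i)) (v i {τ i}) ≤ sup i := by
    intro i hi
    rw [hsup, hi]
    apply max_le
    · exact hmono i _ _ Finset.subset_union_left
    · apply hmono
      intro x hx
      rw [Finset.mem_singleton] at hx
      subst hx
      apply Finset.mem_union_right
      simp
  have hsupnone : ∀ i, ρ i = none → sup i = v i (R i) := by
    intro i hi
    rw [hsup, hi]
    simp
  -- the per-head product inequality from optimality of τ
  have hheadineq : ∀ a ∈ Hd, d a * ∏ i ∈ W.filter (fun x => head x = a), d i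
      ≤ v a {τ a} * ∏ i ∈ W.filter (fun x => head x = a), v i {τ i} := by
    intro a ha
    have haAbar := hHdAbar a ha
    obtain ⟨haB, haty⟩ := hHdprop a ha
    have hlaJ : ℓ a ∈ J := (hℓ a haAbar).1
    have hPaB : ∀ i ∈ W.filter (fun x => head x = a), i ∈ B :=
      fun i hi => ((hW i).mp (Finset.mem_filter.mp hi).1).1
    have haPa : a ∉ W.filter (fun x => head x = a) := fun hc => haB (hPaB a hc)
    obtain ⟨π, hπPa, hπa, hπelse⟩ : ∃ π : A → G,
        (∀ x ∈ W.filter (fun x => head x = a), π x = sg x) ∧ (π a = ℓ a) ∧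
        (∀ x, x ∉ W.filter (fun x => head x = a) → x ≠ a → π x = τ x) := by
      refine ⟨fun x => if x ∈ W.filter (fun x => head x = a) then sg x
        else if x = a then ℓ a else τ x, ?_, ?_, ?_⟩
      · intro x hx; dsimp only; rw [if_pos hx]
      · dsimp only; rw [if_neg haPa, if_pos rfl]
      · intro x hx1 hx2; dsimp only; rw [if_neg hx1, if_neg hx2]
    have hπinj : Function.Injective π := by
      intro x y hxy
      by_cases hx1 : x ∈ W.filter (fun x => head x = a) <;>
        by_cases hy1 : y ∈ W.filter (fun x => head x = a)
      · exact hsginj x (hPaB x hx1) y (hPaB y hy1)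
          (by rw [← hπPa x hx1, ← hπPa y hy1, hxy])
      · by_cases hy2 : y = a
        · exfalso
          rw [hπPa x hx1, hy2, hπa] at hxy
          exact (hJH (ℓ a)).mp hlaJ (hxy ▸ hsgH x (hPaB x hx1))
        · exfalso
          rw [hπPa x hx1, hπelse y hy1 hy2] at hxy
          have hgx : g x = y := hτinj (by rw [hg x (hPaB x hx1), hxy])
          rcases hPa_g a x hx1 with hin | heq
          · rw [hgx] at hin; exact hy1 hin
          · rw [hgx] at heq; exact hy2 heq
      · by_cases hx2 : x = a
        · exfalso
          rw [hπPa y hy1, hx2, hπa] at hxy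
          exact (hJH (ℓ a)).mp hlaJ (hxy.symm ▸ hsgH y (hPaB y hy1))
        · exfalso
          rw [hπPa y hy1, hπelse x hx1 hx2] at hxy
          have hgy : g y = x := hτinj (by rw [hg y (hPaB y hy1), ← hxy])
          rcases hPa_g a y hy1 with hin | heq
          · rw [hgy] at hin; exact hx1 hin
          · rw [hgy] at heq; exact hx2 heq
      · by_cases hx2 : x = a <;> by_cases hy2 : y = a
        · rw [hx2, hy2]
        · exfalso
          rw [hx2, hπa, hπelse y hy1 hy2] at hxy
          exact (hJH (ℓ a)).mp hlaJ (hxy ▸ hτH y)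
        · exfalso
          rw [hy2, hπa, hπelse x hx1 hx2] at hxy
          exact (hJH (ℓ a)).mp hlaJ (hxy.symm ▸ hτH x)
        · exact hτinj (by rw [← hπelse x hx1 hx2, ← hπelse y hy1 hy2, hxy])
    have hprod := hcmp π hπinj
    have hoff : ∀ x ∉ insert a (W.filter (fun x => head x = a)),
        (fun x => v x {π x}) x = v x {τ x} := by
      intro x hx
      simp only [Finset.mem_insert, not_or] at hx
      dsimp only
      rw [hπelse x hx.2 hx.1]
    have hcan := hcancel (insert a (W.filter (fun x => head x = a)))
      (fun x => v x {π x}) hoff hprod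
    rw [Finset.prod_insert haPa, Finset.prod_insert haPa] at hcan
    have hL : v a {π a} = vl a := by rw [hπa, hvl1 a haAbar]
    have hLP : (∏ x ∈ W.filter (fun x => head x = a), v x {π x})
        = ∏ x ∈ W.filter (fun x => head x = a), d x := by
      apply Finset.prod_congr rfl
      intro x hx
      rw [hπPa x hx, ← hbval x (hPaB x hx), hdB x (hPaB x hx)]
    have hda : d a = vl a := by
      rw [hdnB a haB]
      exact max_eq_right (le_of_lt haty)
    rw [hL, hLP] at hcan
    rw [hda]
    exact hcan
  have hdnn : ∀ i, 0 ≤ d i := fun i => le_of_lt (hdpos i)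
  have hDB : D ⊆ B := fun i hi => ((hD i).mp hi).1
  have hHdsub : Hd ⊆ Finset.univ \ B := by
    intro a ha
    rw [Finset.mem_sdiff]
    exact ⟨Finset.mem_univ a, (hHdprop a ha).1⟩
  have hBDW : D ∪ W = B := by
    ext i
    rw [Finset.mem_union, hD]
    constructor
    · rintro (h | h)
      · exact h.1
      · exact ((hW i).mp h).1
    · intro hB
      by_cases hiW : i ∈ W
      · right; exact hiW
      · left; exact ⟨hB, hiW⟩
  have hDWdisj : Disjoint D W := by
    rw [Finset.disjoint_left]
    intro i hi
    exact ((hD i).mp hi).2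
  -- fiberwise decomposition of W by heads
  have hfib : ∀ f : A → ℝ, (∏ a ∈ Hd, ∏ i ∈ W.filter (fun x => head x = a), f i)
      = ∏ i ∈ W, f i := by
    intro f
    apply Finset.prod_fiberwise_of_maps_to
    intro i hi
    rw [hHd]
    exact Finset.mem_image_of_mem head hi
  -- unblocked agents in W and Hd
  have hsupW : ∀ i ∈ W, v i {τ i} ≤ sup i := by
    intro i hi
    have hiD : i ∉ D := fun hc => ((hD i).mp hc).2 hi
    have hρi := hρ3 i hiD (hWnb i hi)
    exact le_trans (le_max_right _ _) (hsupτ i hρi)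
  have hsupHd : ∀ a ∈ Hd, v a {τ a} ≤ sup a := by
    intro a ha
    have haD : a ∉ D := fun hc => (hHdprop a ha).1 (hDB hc)
    have hρa := hρ3 a haD (hHdnb a ha)
    exact le_trans (le_max_right _ _) (hsupτ a hρa)
  have hG2 : (∏ a ∈ Hd, d a) * (∏ i ∈ W, d i) ≤ (∏ a ∈ Hd, sup a) * (∏ i ∈ W, sup i) := by
    rw [← hfib d, ← hfib sup, ← Finset.prod_mul_distrib, ← Finset.prod_mul_distrib]
    apply Finset.prod_le_prod
    · intro a _
      exact mul_nonneg (hdnn a) (Finset.prod_nonneg (fun i _ => hdnn i))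
    · intro a ha
      calc d a * ∏ i ∈ W.filter (fun x => head x = a), d i
          ≤ v a {τ a} * ∏ i ∈ W.filter (fun x => head x = a), v i {τ i} := hheadineq a ha
        _ ≤ sup a * ∏ i ∈ W.filter (fun x => head x = a), sup i := by
            apply mul_le_mul (hsupHd a ha)
            · apply Finset.prod_le_prod
              · intro i _; exact hvnn _ _
              · intro i hi; exact hsupW i (Finset.mem_filter.mp hi).1
            · exact Finset.prod_nonneg (fun i _ => hvnn _ _)
            · exact hsupnn a
  have hG1 : (∏ i ∈ D, d i) ≤ ∏ i ∈ D, sup i := by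
    apply Finset.prod_le_prod (fun i _ => hdnn i)
    intro i hi
    rw [hdB i (hDB hi)]
    exact hsupD i hi
  have hG3 : (∏ i ∈ (Finset.univ \ B) \ Hd, d i) ≤ ∏ i ∈ (Finset.univ \ B) \ Hd, sup i := by
    apply Finset.prod_le_prod (fun i _ => hdnn i)
    intro k hk
    have hkB : k ∉ B := (Finset.mem_sdiff.mp (Finset.mem_sdiff.mp hk).1).2
    have hkD : k ∉ D := fun hc => hkB (hDB hc)
    rw [hdnB k hkB]
    by_cases hks : τ k ∈ SD
    · have hρk := hρ2 k hkD hks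
      rw [hsupnone k hρk]
      have := (hblktype k hkD hks).2
      rw [max_eq_left (le_of_not_gt this)]
    · have hρk := hρ3 k hkD hks
      have h1 := hsupτ k hρk
      have h2 : max (v k (R k)) (vl k) ≤ max (v k (R k)) (v k {τ k}) :=
        max_le (le_max_left _ _) (le_trans (hvlt k) (le_max_right _ _))
      linarith
  have hProd : (∏ i, d i) ≤ ∏ i, sup i := by
    have hsplitd : ∀ f : A → ℝ,
        (∏ i, f i) = ((∏ i ∈ (Finset.univ \ B) \ Hd, f i) * (∏ a ∈ Hd, f a))
          * ((∏ i ∈ D, f i) * (∏ i ∈ W, f i)) := by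
      intro f
      rw [← Finset.prod_sdiff (Finset.subset_univ B)]
      congr 1
      · rw [← Finset.prod_sdiff hHdsub]
      · rw [← hBDW, Finset.prod_union hDWdisj]
    rw [hsplitd d, hsplitd sup]
    have hnn1 : (0:ℝ) ≤ ∏ i ∈ (Finset.univ \ B) \ Hd, d i :=
      Finset.prod_nonneg (fun i _ => hdnn i)
    have hnn2 : (0:ℝ) ≤ ∏ a ∈ Hd, d a := Finset.prod_nonneg (fun i _ => hdnn i)
    have hnn3 : (0:ℝ) ≤ ∏ i ∈ D, d i := Finset.prod_nonneg (fun i _ => hdnn i)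
    have hnn4 : (0:ℝ) ≤ ∏ i ∈ W, d i := Finset.prod_nonneg (fun i _ => hdnn i)
    have hnnS1 : (0:ℝ) ≤ ∏ i ∈ (Finset.univ \ B) \ Hd, sup i :=
      Finset.prod_nonneg (fun i _ => hsupnn i)
    have hnnS3 : (0:ℝ) ≤ ∏ i ∈ D, sup i := Finset.prod_nonneg (fun i _ => hsupnn i)
    -- rearrange so that the paired Hd×W bound can be applied
    have hstep : ((∏ a ∈ Hd, d a) * (∏ i ∈ W, d i)) * ((∏ i ∈ (Finset.univ \ B) \ Hd, d i)
        * (∏ i ∈ D, d i))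
        ≤ ((∏ a ∈ Hd, sup a) * (∏ i ∈ W, sup i)) * ((∏ i ∈ (Finset.univ \ B) \ Hd, sup i)
        * (∏ i ∈ D, sup i)) := by
      apply mul_le_mul hG2
      · exact mul_le_mul hG3 hG1 hnn3 hnnS1
      · exact mul_nonneg hnn1 hnn3
      · exact mul_nonneg (Finset.prod_nonneg (fun i _ => hsupnn i))
          (Finset.prod_nonneg (fun i _ => hsupnn i))
    nlinarith [hstep]
  -- conclude
  refine ⟨ρ, ?_, ?_, ?_⟩
  · intro i x hx
    rw [Option.mem_def] at hx
    by_cases hi : i ∈ D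
    · rw [hρ1 i hi] at hx
      injection hx with h
      rw [← h]
      exact hsgH i (hDB hi)
    · by_cases hks : τ i ∈ SD
      · rw [hρ2 i hi hks] at hx
        exact absurd hx (by simp)
      · rw [hρ3 i hi hks] at hx
        injection hx with h
        rw [← h]
        exact hτH i
  · intro i k x hxi hxk
    have hinv : ∀ j, ρ j = some x → (j ∈ D ∧ sg j = x) ∨ (j ∉ D ∧ τ j ∉ SD ∧ τ j = x) := by
      intro j hj
      by_cases hjD : j ∈ D
      · left
        refine ⟨hjD, ?_⟩
        rw [hρ1 j hjD] at hj
        injection hj with h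
      · right
        by_cases hks : τ j ∈ SD
        · rw [hρ2 j hjD hks] at hj
          exact absurd hj (by simp)
        · refine ⟨hjD, hks, ?_⟩
          rw [hρ3 j hjD hks] at hj
          injection hj with h
    rcases hinv i hxi with ⟨hiD, hie⟩ | ⟨hiD, hiS, hie⟩ <;>
      rcases hinv k hxk with ⟨hkD, hke⟩ | ⟨hkD, hkS, hke⟩
    · exact hsginj i (hDB hiD) k (hDB hkD) (by rw [hie, hke])
    · exact absurd ((hSD _).mpr ⟨i, hiD, by rw [hie, hke]⟩) hkS
    · exact absurd ((hSD _).mpr ⟨k, hkD, by rw [hke, hie]⟩) hiS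
    · exact hτinj (by rw [hie, hke])
  · have hAM : (∏ i, z i ^ ((n:ℝ)⁻¹)) ≤ 4 * sε := by
      have hw2 : (∑ _i : A, ((n:ℝ)⁻¹)) = 1 := by
        rw [Finset.sum_const, Finset.card_univ, ← hn, nsmul_eq_mul]
        field_simp
      have hgm := Real.geom_mean_le_arith_mean_weighted Finset.univ (fun _ => (n:ℝ)⁻¹) z
        (fun _ _ => hinvnn) hw2 (fun i _ => hznn i)
      have hnpos : (0:ℝ) < n := by exact_mod_cast hn1
      calc (∏ i, z i ^ ((n:ℝ)⁻¹)) ≤ ∑ i, (n:ℝ)⁻¹ * z i := hgm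
        _ = (n:ℝ)⁻¹ * ∑ i, z i := by rw [Finset.mul_sum]
        _ ≤ (n:ℝ)⁻¹ * (4 * sε * n) := mul_le_mul_of_nonneg_left hsumz hinvnn
        _ = 4 * sε := by field_simp
    have hOPTle : OPT ≤ (4 * sε) * ∏ i, sup i ^ ((n:ℝ)⁻¹) := by
      rw [← hOval]
      calc (∏ i, v i (O i) ^ ((n:ℝ)⁻¹)) ≤ ∏ i, (z i * d i) ^ ((n:ℝ)⁻¹) := by
            apply Finset.prod_le_prod
            · intro i _; exact Real.rpow_nonneg (hvnn _ _) _
            · intro i _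
              apply Real.rpow_le_rpow (hvnn _ _) _ hinvnn
              rw [hzd i]; exact hOw i
        _ = ∏ i, (z i ^ ((n:ℝ)⁻¹) * d i ^ ((n:ℝ)⁻¹)) := by
            apply Finset.prod_congr rfl
            intro i _
            exact Real.mul_rpow (hznn i) (hdnn i)
        _ = (∏ i, z i ^ ((n:ℝ)⁻¹)) * (∏ i, d i ^ ((n:ℝ)⁻¹)) := Finset.prod_mul_distrib
        _ ≤ (4 * sε) * (∏ i, d i ^ ((n:ℝ)⁻¹)) := by
            apply mul_le_mul_of_nonneg_right hAM
            exact Finset.prod_nonneg (fun i _ => Real.rpow_nonneg (hdnn i) _)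
        _ ≤ (4 * sε) * (∏ i, sup i ^ ((n:ℝ)⁻¹)) := by
            apply mul_le_mul_of_nonneg_left _ (by nlinarith [hsε1])
            rw [Real.finset_prod_rpow _ _ (fun i _ => hdnn i) _,
              Real.finset_prod_rpow _ _ (fun i _ => hsupnn i) _]
            exact Real.rpow_le_rpow (Finset.prod_nonneg fun i _ => hdnn i) hProd hinvnn
    have h4pos : (0:ℝ) < 4 * (1 + ε) := by rw [hεs]; nlinarith [hsε1]
    rw [div_le_iff₀ h4pos]
    calc OPT ≤ (4 * sε) * ∏ i, sup i ^ ((n:ℝ)⁻¹) := hOPTle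
      _ = (4 * (1+ε)) * ∏ i, v i (R i ∪ (ρ i).toFinset) ^ ((n:ℝ)⁻¹) := by
          rw [hεs]
          congr 1
          apply Finset.prod_congr rfl
          intro i _
          rw [hsup i]
      _ = (∏ i, v i (R i ∪ (ρ i).toFinset) ^ ((n:ℝ)⁻¹)) * (4 * (1+ε)) := mul_comm _ _
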